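/- (Tree-model property of K^#.) If a K^# formula φ is satisfiable, then φ is satisfiable at the root of a finite tree: there is a finite labeled directed graph G and a vertex u such that (G,u) satisfies φ, every vertex of G is reachable from u, u has no incoming edge, and every vertex other than u has exactly one incoming edge. -/

import Mathlib

open scoped Classical

/-- A finite labeled directed graph: edges and a valuation of atomic
propositions (indexed by `ℕ`) at each vertex. -/
structure LGraph (V : Type) [Fintype V] where
  edge : V → V → Bool
  label : V → ℕ → Bool

mutual
/-- Formulas of the logic `K^#`. -/
inductive KForm : Type where
  | atom : ℕ → KForm
  | not : KForm → KForm
  | or : KForm → KForm → KForm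
  | ge0 : KExpr → KForm
/-- Expressions of the logic `K^#`. -/
inductive KExpr : Type where
  | const : ℤ → KExpr
  | ind : KForm → KExpr
  | count : KForm → KExpr
  | add : KExpr → KExpr → KExpr
  | scale : ℤ → KExpr → KExpr
end

mutual
/-- Truth of a `K^#` formula at a pointed graph. -/
def KForm.sat {V : Type} [Fintype V] (G : LGraph V) (u : V) : KForm → Bool
  | .atom p => G.label u p
  | .not φ => !(KForm.sat G u φ)
  | .or φ ψ => KForm.sat G u φ || KForm.sat G u ψ
  | .ge0 E => decide (0 ≤ KExpr.val G u E)
/-- Value of a `K^#` expression at a pointed graph. -/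
def KExpr.val {V : Type} [Fintype V] (G : LGraph V) (u : V) : KExpr → ℤ
  | .const c => c
  | .ind φ => if KForm.sat G u φ then 1 else 0
  | .count φ =>
      ((Finset.univ.filter (fun v => G.edge u v = true ∧ KForm.sat G v φ = true)).card : ℤ)
  | .add E₁ E₂ => KExpr.val G u E₁ + KExpr.val G u E₂
  | .scale c E => c * KExpr.val G u E
end

/-- A `K^#` formula is satisfiable when it is true at some finite pointed
labeled graph. -/
def KSat (φ : KForm) : Prop :=
  ∃ (n : ℕ) (G : LGraph (Fin n)) (u : Fin n), KForm.sat G u φ = true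

/-! ### Auxiliary machinery for the tree-model property -/

mutual
/-- Modal depth of a formula. -/
def fdepth : KForm → ℕ
  | .atom _ => 0
  | .not φ => fdepth φ
  | .or φ ψ => max (fdepth φ) (fdepth ψ)
  | .ge0 E => edepth E
/-- Modal depth of an expression. -/
def edepth : KExpr → ℕ
  | .const _ => 0
  | .ind φ => fdepth φ
  | .count φ => fdepth φ + 1
  | .add E₁ E₂ => max (edepth E₁) (edepth E₂)
  | .scale _ E => edepth E
end

/-- Pullback of a labeled graph along an equivalence of vertex types. -/
def LGraph.pull {V W : Type} [Fintype V] [Fintype W] (G : LGraph V) (e : W ≃ V) : LGraph W :=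
  ⟨fun a b => G.edge (e a) (e b), fun a p => G.label (e a) p⟩

mutual
theorem sat_pull {V W : Type} [Fintype V] [Fintype W] (G : LGraph V) (e : W ≃ V) :
    ∀ (φ : KForm) (w : W), KForm.sat (G.pull e) w φ = KForm.sat G (e w) φ
  | .atom p, w => rfl
  | .not φ, w => by simp [KForm.sat, sat_pull G e φ w]
  | .or φ ψ, w => by simp [KForm.sat, sat_pull G e φ w, sat_pull G e ψ w]
  | .ge0 E, w => by simp [KForm.sat, val_pull G e E w]
theorem val_pull {V W : Type} [Fintype V] [Fintype W] (G : LGraph V) (e : W ≃ V) :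
    ∀ (E : KExpr) (w : W), KExpr.val (G.pull e) w E = KExpr.val G (e w) E
  | .const c, w => rfl
  | .ind φ, w => by simp [KExpr.val, sat_pull G e φ w]
  | .count φ, w => by
      simp only [KExpr.val, Nat.cast_inj]
      apply Finset.card_bij' (fun b _ => e b) (fun v _ => e.symm v)
      · intro b hb
        simp only [Finset.mem_filter, Finset.mem_univ, true_and] at hb ⊢
        rcases hb with ⟨h1, h2⟩
        rw [sat_pull G e φ b] at h2
        exact ⟨h1, h2⟩
      · intro v hv
        simp only [Finset.mem_filter, Finset.mem_univ, true_and] at hv ⊢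
        rcases hv with ⟨h1, h2⟩
        refine ⟨?_, ?_⟩
        · show G.edge (e w) (e (e.symm v)) = true
          simpa using h1
        · rw [sat_pull G e φ]
          simpa using h2
      · intro b _; simp
      · intro v _; simp
  | .add E₁ E₂, w => by simp [KExpr.val, val_pull G e E₁ w, val_pull G e E₂ w]
  | .scale c E, w => by simp [KExpr.val, val_pull G e E w]
end

/-- The vertex reached at the end of a path `u :: l`. -/
def endOf {n : ℕ} (u : Fin n) (l : List (Fin n)) : Fin n :=
  (u :: l).getLast (by simp)

theorem endOf_nil {n : ℕ} (u : Fin n) : endOf u [] = u := rfl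

theorem endOf_cons {n : ℕ} (u a : Fin n) (l : List (Fin n)) :
    endOf u (a :: l) = endOf a l := List.getLast_cons _

theorem endOf_concat {n : ℕ} (u v : Fin n) (l : List (Fin n)) :
    endOf u (l ++ [v]) = v := by
  induction l generalizing u with
  | nil => rfl
  | cons a t ih => rw [List.cons_append, endOf_cons]; exact ih a

theorem chain_concat {n : ℕ} {R : Fin n → Fin n → Prop} (u v : Fin n) (l : List (Fin n)) :
    List.Chain R u (l ++ [v]) ↔ List.Chain R u l ∧ R (endOf u l) v := by
  induction l generalizing u with
  | nil => simp [endOf_nil, List.Chain, List.isChain_cons_cons]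
  | cons a t ih =>
      simp only [List.Chain] at ih ⊢
      simp only [List.cons_append, List.isChain_cons_cons, ih, endOf_cons, and_assoc]

/-- Vertices of the depth-`d` tree unraveling of `(G, u)`: edge-paths from `u`
of length at most `d`. -/
def TreeV {n : ℕ} (G : LGraph (Fin n)) (u : Fin n) (d : ℕ) : Type :=
  {l : List (Fin n) // l.length ≤ d ∧ List.Chain (fun a b => G.edge a b = true) u l}

noncomputable instance {n : ℕ} (G : LGraph (Fin n)) (u : Fin n) (d : ℕ) :
    Fintype (TreeV G u d) := by
  apply Fintype.ofInjective
    (fun (a : TreeV G u d) => ((⟨a.1.length, Nat.lt_succ_of_le a.2.1⟩ : Fin (d + 1)), fun i : Fin d => a.1.getD i u))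
  intro a b hab
  have h1 : a.1.length = b.1.length := congrArg Fin.val (congrArg Prod.fst hab)
  have h2 : ∀ i : Fin d, a.1.getD i u = b.1.getD i u := fun i => congrFun (congrArg Prod.snd hab) i
  apply Subtype.ext
  apply List.ext_getElem h1
  intro i hi hi'
  have hid : i < d := lt_of_lt_of_le hi a.2.1
  have := h2 ⟨i, hid⟩
  simpa [List.getD_eq_getElem?_getD, List.getElem?_eq_getElem, hi, hi'] using this

/-- The depth-`d` tree unraveling of `(G, u)` as a labeled graph. -/
noncomputable def treeG {n : ℕ} (G : LGraph (Fin n)) (u : Fin n) (d : ℕ) :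
    LGraph (TreeV G u d) :=
  ⟨fun a b => decide (∃ v, b.1 = a.1 ++ [v]), fun a p => G.label (endOf u a.1) p⟩

theorem treeG_edge_iff {n : ℕ} (G : LGraph (Fin n)) (u : Fin n) (d : ℕ)
    (a b : TreeV G u d) : (treeG G u d).edge a b = true ↔ ∃ v, b.1 = a.1 ++ [v] := by
  simp [treeG]

mutual
theorem sat_tree {n : ℕ} (G : LGraph (Fin n)) (u : Fin n) (d : ℕ) :
    ∀ (φ : KForm) (a : TreeV G u d), fdepth φ + a.1.length ≤ d →
      KForm.sat (treeG G u d) a φ = KForm.sat G (endOf u a.1) φ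
  | .atom p, a, _ => rfl
  | .not φ, a, h => by
      simp only [KForm.sat]
      rw [sat_tree G u d φ a (by simp only [fdepth] at h ⊢; omega)]
  | .or φ ψ, a, h => by
      simp only [KForm.sat]
      rw [sat_tree G u d φ a (by simp only [fdepth] at h ⊢; omega),
        sat_tree G u d ψ a (by simp only [fdepth] at h ⊢; omega)]
  | .ge0 E, a, h => by
      simp only [KForm.sat]
      rw [val_tree G u d E a (by simpa [fdepth] using h)]
theorem val_tree {n : ℕ} (G : LGraph (Fin n)) (u : Fin n) (d : ℕ) :
    ∀ (E : KExpr) (a : TreeV G u d), edepth E + a.1.length ≤ d →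
      KExpr.val (treeG G u d) a E = KExpr.val G (endOf u a.1) E
  | .const c, a, _ => rfl
  | .ind φ, a, h => by
      simp only [KExpr.val]
      rw [sat_tree G u d φ a (by simpa [edepth] using h)]
  | .count φ, a, h => by
      have hlen : fdepth φ + (a.1.length + 1) ≤ d := by
        simp only [edepth] at h; omega
      simp only [KExpr.val, Nat.cast_inj]
      apply Finset.card_bij (fun (b : TreeV G u d) _ => endOf u b.1)
      · intro b hb
        simp only [Finset.mem_filter, Finset.mem_univ, true_and] at hb ⊢
        obtain ⟨h1, h2⟩ := hb
        obtain ⟨v, hv⟩ := (treeG_edge_iff G u d a b).1 h1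
        have hbl : b.1.length = a.1.length + 1 := by rw [hv]; simp
        rw [sat_tree G u d φ b (by omega)] at h2
        have he : endOf u b.1 = v := by rw [hv]; exact endOf_concat u v a.1
        refine ⟨?_, by rw [he] at h2 ⊢; exact h2⟩
        rw [he]
        have hc := b.2.2
        rw [hv, chain_concat] at hc
        exact hc.2
      · intro b1 hb1 b2 hb2 heq
        simp only [Finset.mem_filter, Finset.mem_univ, true_and] at hb1 hb2
        obtain ⟨v1, hv1⟩ := (treeG_edge_iff G u d a b1).1 hb1.1
        obtain ⟨v2, hv2⟩ := (treeG_edge_iff G u d a b2).1 hb2.1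
        rw [hv1, endOf_concat] at heq
        rw [hv2, endOf_concat] at heq
        exact Subtype.ext (by rw [hv1, hv2, heq])
      · intro v hv
        simp only [Finset.mem_filter, Finset.mem_univ, true_and] at hv
        refine ⟨⟨a.1 ++ [v], ?_, ?_⟩, ?_, ?_⟩
        · simp only [List.length_append, List.length_singleton]; omega
        · rw [chain_concat]; exact ⟨a.2.2, hv.1⟩
        · refine Finset.mem_filter.2 ⟨Finset.mem_univ _, ?_⟩
          refine ⟨(treeG_edge_iff G u d a _).2 ⟨v, rfl⟩, ?_⟩
          refine (sat_tree G u d φ _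
            (by show fdepth φ + (a.1 ++ [v]).length ≤ d
                simp only [List.length_append, List.length_singleton]; omega)).trans ?_
          show KForm.sat G (endOf u (a.1 ++ [v])) φ = true
          rw [endOf_concat]
          exact hv.2
        · exact endOf_concat u v a.1
  | .add E₁ E₂, a, h => by
      simp only [KExpr.val]
      rw [val_tree G u d E₁ a (by simp only [edepth] at h ⊢; omega),
        val_tree G u d E₂ a (by simp only [edepth] at h ⊢; omega)]
  | .scale c E, a, h => by
      simp only [KExpr.val]
      rw [val_tree G u d E a (by simpa [edepth] using h)]
end

theorem tree_root_sat {n : ℕ} (G : LGraph (Fin n)) (u : Fin n) (φ : KForm)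
    (h : KForm.sat G u φ = true) :
    KForm.sat (treeG G u (fdepth φ)) ⟨[], by simp [List.Chain]⟩ φ = true := by
  rw [sat_tree G u (fdepth φ) φ ⟨[], by simp [List.Chain]⟩ (by simp)]
  exact h

/-- The root of the tree unraveling. -/
def treeRoot {n : ℕ} (G : LGraph (Fin n)) (u : Fin n) (d : ℕ) : TreeV G u d :=
  ⟨[], by simp [List.Chain]⟩

theorem tree_reach {n : ℕ} (G : LGraph (Fin n)) (u : Fin n) (d : ℕ) (a : TreeV G u d) :
    Relation.ReflTransGen (fun x y => (treeG G u d).edge x y = true) (treeRoot G u d) a := by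
  obtain ⟨l, hl⟩ := a
  induction l using List.reverseRecOn with
  | nil => exact Relation.ReflTransGen.refl
  | append_singleton t v ih =>
      have ht : t.length ≤ d ∧ List.Chain (fun a b => G.edge a b = true) u t := by
        rcases hl with ⟨h1, h2⟩
        rw [chain_concat] at h2
        refine ⟨?_, h2.1⟩
        simp only [List.length_append, List.length_singleton] at h1
        omega
      refine Relation.ReflTransGen.tail (ih ht) ?_
      exact (treeG_edge_iff G u d ⟨t, ht⟩ ⟨t ++ [v], hl⟩).2 ⟨v, rfl⟩

theorem tree_no_in_root {n : ℕ} (G : LGraph (Fin n)) (u : Fin n) (d : ℕ) (b : TreeV G u d) :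
    ¬ ((treeG G u d).edge b (treeRoot G u d) = true) := by
  rw [treeG_edge_iff]
  rintro ⟨v, hv⟩
  exact (List.append_ne_nil_of_right_ne_nil b.1 (by simp) hv.symm)

theorem tree_unique_parent {n : ℕ} (G : LGraph (Fin n)) (u : Fin n) (d : ℕ)
    (a : TreeV G u d) (ha : a ≠ treeRoot G u d) :
    ∃! w : TreeV G u d, (treeG G u d).edge w a = true := by
  have hne : a.1 ≠ [] := by
    intro h0
    exact ha (Subtype.ext h0)
  have hdecomp : a.1 = a.1.dropLast ++ [a.1.getLast hne] := (List.dropLast_concat_getLast hne).symm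
  have hchain : List.Chain (fun x y => G.edge x y = true) u a.1.dropLast := by
    have := a.2.2
    rw [hdecomp, chain_concat] at this
    exact this.1
  have hlen : a.1.dropLast.length ≤ d := by
    have := a.2.1
    have : a.1.dropLast.length = a.1.length - 1 := List.length_dropLast
    omega
  refine ⟨⟨a.1.dropLast, hlen, hchain⟩, ?_, ?_⟩
  · exact (treeG_edge_iff G u d _ a).2 ⟨a.1.getLast hne, hdecomp⟩
  · intro w hw
    rw [treeG_edge_iff] at hw
    obtain ⟨v, hv⟩ := hw
    apply Subtype.ext
    show w.1 = a.1.dropLast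
    rw [hv, List.dropLast_concat]

/-- Tree-model property of `K^#`: a satisfiable formula is satisfiable at the root
of a finite tree: every vertex is reachable from the root `u`, the root has no
incoming edge, and every other vertex has exactly one incoming edge. -/
theorem tree_model_property (φ : KForm) (h : KSat φ) :
    ∃ (n : ℕ) (G : LGraph (Fin n)) (u : Fin n),
      KForm.sat G u φ = true ∧
      (∀ v : Fin n, Relation.ReflTransGen (fun a b => G.edge a b = true) u v) ∧
      (∀ v : Fin n, ¬ (G.edge v u = true)) ∧
      (∀ v : Fin n, v ≠ u → ∃! w : Fin n, G.edge w v = true) := by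
  obtain ⟨n, G, u, hsat⟩ := h
  set d := fdepth φ with hd
  set T := TreeV G u d with hT
  let e : T ≃ Fin (Fintype.card T) := Fintype.equivFin T
  refine ⟨Fintype.card T, (treeG G u d).pull e.symm, e (treeRoot G u d), ?_, ?_, ?_, ?_⟩
  · rw [sat_pull, Equiv.symm_apply_apply]
    exact tree_root_sat G u φ hsat
  · intro v
    have h1 := tree_reach G u d (e.symm v)
    have h2 := Relation.ReflTransGen.lift (r := fun x y => (treeG G u d).edge x y = true)
      (p := fun x y => ((treeG G u d).pull e.symm).edge x y = true) e
      (fun a b hab => by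
        show ((treeG G u d).pull e.symm).edge (e a) (e b) = true
        show (treeG G u d).edge (e.symm (e a)) (e.symm (e b)) = true
        simpa using hab) _ _ h1
    simpa [Function.onFun] using h2
  · intro v hv
    have : (treeG G u d).edge (e.symm v) (e.symm (e (treeRoot G u d))) = true := hv
    rw [Equiv.symm_apply_apply] at this
    exact tree_no_in_root G u d (e.symm v) this
  · intro v hv
    have hne : e.symm v ≠ treeRoot G u d := by
      intro h0
      apply hv
      rw [← Equiv.apply_symm_apply e v, h0]
    obtain ⟨w, hw, huniq⟩ := tree_unique_parent G u d (e.symm v) hne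
    refine ⟨e w, ?_, ?_⟩
    · show (treeG G u d).edge (e.symm (e w)) (e.symm v) = true
      simpa using hw
    · intro w' hw'
      have : (treeG G u d).edge (e.symm w') (e.symm v) = true := hw'
      have := huniq (e.symm w') this
      rw [← Equiv.apply_symm_apply e w', this]
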